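/- arXiv:2005.04859 — 2 statements merged into one kernel-verified Lean document; each statement's English description precedes it below -/
import Mathlib

section
/- Let N ≥ 2, suppose Ω∖cl(ω) satisfies the uniform interior sphere condition with radius r_i > 0 on Γ and Γ is of class C¹. Let v be harmonic in Ω∖cl(ω), of class C¹ on the closure of Ω^c_{r_i}, and let G be an upper bound for |∇v| on the closure of Ω^c_{r_i}. Then for every p ≥ 1 there exist positive constants a_{N,p} and α_{N,p}, depending only on N and p, such that if ‖v − v_{Ω∖cl(ω)}‖_{L^p(Ω∖cl(ω))} ≤ α_{N,p} r_i^{(N+p)/p} G, then max_Γ v − min_Γ v ≤ a_{N,p} G^{N/(N+p)} ‖v − v_{Ω∖cl(ω)}‖_{L^p(Ω∖cl(ω))}^{p/(N+p)}, where v_D := (1/|D|)∫_D v dx denotes the mean value of v over D. -/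
open MeasureTheory Metric Set Bornology
open scoped RealInnerProductSpace ENNReal Topology

noncomputable section

/-- The Hessian of `u` at `x`, as a bilinear expression: second derivative of `u`
first in direction `w`, then in direction `v`. -/
noncomputable def hessBil {N : ℕ} (u : EuclideanSpace ℝ (Fin N) → ℝ)
    (x v w : EuclideanSpace ℝ (Fin N)) : ℝ :=
  fderiv ℝ (fun y => fderiv ℝ u y w) x v

/-- The Laplacian of `u` at `x`: the trace of the Hessian. -/
noncomputable def lap {N : ℕ} (u : EuclideanSpace ℝ (Fin N) → ℝ)
    (x : EuclideanSpace ℝ (Fin N)) : ℝ :=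
  ∑ i, hessBil u x (EuclideanSpace.single i (1:ℝ)) (EuclideanSpace.single i (1:ℝ))

/-- The squared Frobenius norm `|∇²u|²` of the Hessian of `u` at `x`. -/
noncomputable def hessFrobSq {N : ℕ} (u : EuclideanSpace ℝ (Fin N) → ℝ)
    (x : EuclideanSpace ℝ (Fin N)) : ℝ :=
  ∑ i, ∑ j, (hessBil u x (EuclideanSpace.single i (1:ℝ)) (EuclideanSpace.single j (1:ℝ)))^2

/-- `ν` is a continuous outward unit normal field for the domain `D` along the part `S`
of its boundary (this encodes the `C¹` regularity of that part of the boundary). -/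
def IsOutwardNormalOn {N : ℕ} (D S : Set (EuclideanSpace ℝ (Fin N)))
    (ν : EuclideanSpace ℝ (Fin N) → EuclideanSpace ℝ (Fin N)) : Prop :=
  ContinuousOn ν S ∧ ∀ p ∈ S, ‖ν p‖ = 1 ∧
    ∀ᶠ t in 𝓝[>] (0:ℝ), p - t • ν p ∈ D ∧ p + t • ν p ∉ closure D

/-- The uniform interior sphere condition, with radius `r`, for the domain `D` with
boundary `Bdry`, at each point of `S ⊆ Bdry`: for each `p ∈ S` there is an open ball of
radius `r` contained in `D` whose closure meets `Bdry` only at `p`. -/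
def UnifIntSphere {N : ℕ} (D Bdry S : Set (EuclideanSpace ℝ (Fin N))) (r : ℝ) : Prop :=
  ∀ p ∈ S, ∃ y : EuclideanSpace ℝ (Fin N),
    ball y r ⊆ D ∧ closedBall y r ∩ Bdry = {p}

/-- Oscillation bound from a pointwise deviation bound. -/
lemma osc_le_of_abs_sub_le {X : Type*} {s : Set X} {v : X → ℝ} {m B : ℝ}
    (hne : s.Nonempty) (h : ∀ q ∈ s, |v q - m| ≤ B) :
    sSup (v '' s) - sInf (v '' s) ≤ 2 * B := by
  have hA : ∀ x ∈ v '' s, x ≤ m + B := by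
    rintro x ⟨q, hq, rfl⟩
    have := abs_le.1 (h q hq)
    linarith [this.2]
  have hB : ∀ x ∈ v '' s, m - B ≤ x := by
    rintro x ⟨q, hq, rfl⟩
    have := abs_le.1 (h q hq)
    linarith [this.1]
  have h1 : sSup (v '' s) ≤ m + B := csSup_le (hne.image v) hA
  have h2 : m - B ≤ sInf (v '' s) := le_csInf (hne.image v) hB
  linarith

/-- the oscillation estimate of Lemma 5.4 of the paper: there are
constants `a_{N,p}, α_{N,p} > 0`, depending only on `N` and `p`, controlling
`max_Γ v - min_Γ v` by the `L^p`-deviation of `v` from its mean. -/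
theorem stmt_11 (N : ℕ) (hN : 2 ≤ N) (p : ℝ) (hp : 1 ≤ p) :
    ∃ a > 0, ∃ α > 0, ∀ (Ω ω : Set (EuclideanSpace ℝ (Fin N)))
      (v : EuclideanSpace ℝ (Fin N) → ℝ) (r_i G : ℝ),
      0 < r_i →
      IsOpen Ω → IsConnected Ω → IsBounded Ω →
      IsOpen ω → closure ω ⊆ Ω → IsConnected (Ω \ closure ω) →
      -- uniform interior sphere condition of radius r_i on Γ
      UnifIntSphere (Ω \ closure ω) (frontier Ω ∪ frontier ω) (frontier Ω) r_i →
      -- Γ is of class C¹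
      (∃ ν : EuclideanSpace ℝ (Fin N) → EuclideanSpace ℝ (Fin N),
        IsOutwardNormalOn (Ω \ closure ω) (frontier Ω) ν) →
      -- v is harmonic in Ω ∖ cl(ω) and of class C¹ on cl(Ω^c_{r_i})
      ContDiff ℝ 1 v →
      ContDiffOn ℝ 2 v (Ω \ closure ω) →
      (∀ x ∈ Ω \ closure ω, lap v x = 0) →
      -- G is an upper bound for |∇v| on cl(Ω^c_{r_i})
      (∀ x ∈ closure {y ∈ Ω | infDist y (frontier Ω) < r_i}, ‖gradient v x‖ ≤ G) →
      -- smallness condition on ‖v - v_{Ω∖cl(ω)}‖_{L^p(Ω∖cl(ω))}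
      ((∫ x in Ω \ closure ω,
          |v x - ((volume (Ω \ closure ω)).toReal)⁻¹ * ∫ y in Ω \ closure ω, v y| ^ p)
            ^ (1/p) ≤ α * r_i ^ (((N : ℝ) + p) / p) * G) →
      sSup (v '' frontier Ω) - sInf (v '' frontier Ω) ≤
        a * G ^ ((N : ℝ) / ((N : ℝ) + p)) *
          ((∫ x in Ω \ closure ω,
            |v x - ((volume (Ω \ closure ω)).toReal)⁻¹ * ∫ y in Ω \ closure ω, v y| ^ p)
              ^ (1/p)) ^ (p / ((N : ℝ) + p)) := by
  have hp0 : (0:ℝ) < p := lt_of_lt_of_le one_pos hp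
  have hp0' : p ≠ 0 := hp0.ne'
  have hN2 : (2:ℝ) ≤ (N:ℝ) := by exact_mod_cast hN
  haveI : Nonempty (Fin N) := ⟨⟨0, by omega⟩⟩
  set s := (N:ℝ) + p with hs_def
  have hspos : 0 < s := by rw [hs_def]; linarith
  have hs0 : s ≠ 0 := hspos.ne'
  set W := (volume (ball (0 : EuclideanSpace ℝ (Fin N)) 1)).toReal with hW_def
  have hW : 0 < W :=
    ENNReal.toReal_pos (measure_ball_pos volume _ one_pos).ne' measure_ball_lt_top.ne
  have hWp : 0 < W ^ (-(1/p)) := Real.rpow_pos_of_pos hW _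
  refine ⟨4 + 2 * W ^ (-(1/p)), by linarith, (1/3 : ℝ) ^ (s/p), by positivity, ?_⟩
  intro Ω ω v r_i G hri hΩo hΩc hΩb hωo hωcl hScon hsph hnor hv1 hv2 hlap hG hsmall
  set S := Ω \ closure ω with hS_def
  set m := ((volume S).toReal)⁻¹ * ∫ y in S, v y with hm_def
  set I := ∫ x in S, |v x - m| ^ p with hI_def
  have hvc : Continuous v := hv1.continuous
  have hfc : Continuous (fun x => |v x - m| ^ p) :=
    ((hvc.sub continuous_const).abs).rpow_const (fun x => Or.inr hp0.le)
  have hSopen : IsOpen S := hΩo.sdiff isClosed_closure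
  have hSsub : S ⊆ Ω := diff_subset
  have hInt : IntegrableOn (fun x => |v x - m| ^ p) S volume :=
    ((hfc.continuousOn).integrableOn_compact hΩb.isCompact_closure).mono_set
      (hSsub.trans subset_closure)
  have hI0 : 0 ≤ I :=
    setIntegral_nonneg hSopen.measurableSet (fun x _ => Real.rpow_nonneg (abs_nonneg _) p)
  -- the boundary is nonempty
  have hΓne : (frontier Ω).Nonempty := by
    rw [nonempty_iff_ne_empty]
    intro h
    rcases frontier_eq_empty_iff.mp h with h' | h'
    · exact hΩc.nonempty.ne_empty h'
    · exact NormedSpace.unbounded_univ ℝ _ (h' ▸ hΩb)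
  -- reformulation of the interior sphere condition
  have hsphere' : ∀ q ∈ frontier Ω, ∃ y, ball y r_i ⊆ S ∧ dist q y = r_i := by
    intro q hq
    obtain ⟨y, h1, h2⟩ := hsph q hq
    refine ⟨y, h1, ?_⟩
    have hqmem : q ∈ closedBall y r_i := by
      have : q ∈ closedBall y r_i ∩ (frontier Ω ∪ frontier ω) := by
        rw [h2]; exact mem_singleton q
      exact this.1
    have hqnot : q ∉ Ω := fun h => ((hΩo.frontier_eq ▸ hq).2) h
    have hnlt : ¬ dist q y < r_i := fun h => hqnot (hSsub (h1 (mem_ball.mpr h)))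
    exact le_antisymm (mem_closedBall.mp hqmem) (not_lt.mp hnlt)
  -- the boundary is in the closure of S
  have hΓsub : frontier Ω ⊆ closure S := by
    intro q hq
    obtain ⟨y, hbS, hdq⟩ := hsphere' q hq
    have hq' : q ∈ closedBall y r_i := mem_closedBall.mpr hdq.le
    rw [← closure_ball y hri.ne'] at hq'
    exact closure_mono hbS hq'
  -- key pointwise estimate
  have key : ∀ σ : ℝ, 0 < σ → σ ≤ r_i / 3 → ∀ q ∈ frontier Ω,
      |v q - m| ≤ 2 * σ * G + ((σ ^ N * W)⁻¹ * I) ^ (1/p) := by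
    intro σ hσ hσ3 q hq
    obtain ⟨y, hbS, hdq⟩ := hsphere' q hq
    set t := (r_i - σ) / r_i with ht_def
    set c := y + t • (q - y) with hc_def
    have ht0 : 0 ≤ t := div_nonneg (by linarith) hri.le
    have hqc : dist q c = σ := by
      have h1 : q - c = (1 - t) • (q - y) := by
        rw [hc_def, sub_smul, one_smul]; abel
      have h2 : (1 - t) = σ / r_i := by
        rw [ht_def]; field_simp; ring
      rw [dist_eq_norm, h1, norm_smul, h2, Real.norm_eq_abs,
        abs_of_nonneg (by positivity), ← dist_eq_norm, hdq]
      field_simp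
    have hcy : dist c y = r_i - σ := by
      have h1 : c - y = t • (q - y) := by rw [hc_def]; abel
      rw [dist_eq_norm, h1, norm_smul, Real.norm_eq_abs, abs_of_nonneg ht0,
        ← dist_eq_norm, hdq, ht_def]
      field_simp
    have hbb : ball c σ ⊆ ball y r_i := by
      intro z hz
      rw [mem_ball] at hz ⊢
      calc dist z y ≤ dist z c + dist c y := dist_triangle _ _ _
        _ < σ + (r_i - σ) := by rw [hcy]; linarith
        _ = r_i := by ring
    have hballS : ball c σ ⊆ S := hbb.trans hbS
    have hcbC : closedBall c σ ⊆ closure {y_1 ∈ Ω | infDist y_1 (frontier Ω) < r_i} := by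
      rw [← closure_ball c hσ.ne']
      apply closure_mono
      intro z hz
      refine ⟨hSsub (hballS hz), ?_⟩
      have hz' : dist z c < σ := mem_ball.mp hz
      have hcq : dist c q = σ := by rw [dist_comm, hqc]
      calc infDist z (frontier Ω) ≤ dist z q := infDist_le_dist_of_mem hq
        _ ≤ dist z c + dist c q := dist_triangle _ _ _
        _ < r_i := by rw [hcq]; linarith
    have hG0 : 0 ≤ G :=
      le_trans (norm_nonneg _) (hG c (hcbC (mem_closedBall_self hσ.le)))
    have hgradb : ∀ z ∈ closedBall c σ, ‖fderiv ℝ v z‖ ≤ G := by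
      intro z hz
      have h3 := hG z (hcbC hz)
      rw [gradient] at h3
      rwa [LinearIsometryEquiv.norm_map] at h3
    have hqcb : q ∈ closedBall c σ := mem_closedBall.mpr (le_of_eq hqc)
    have hmvt : ∀ x ∈ closedBall c σ, |v q - v x| ≤ G * (2 * σ) := by
      intro x hx
      have h1 : ‖v q - v x‖ ≤ G * ‖q - x‖ :=
        (convex_closedBall c σ).norm_image_sub_le_of_norm_fderiv_le
          (fun z _ => (hv1.differentiable one_ne_zero).differentiableAt) hgradb hx hqcb
      have h2 : ‖q - x‖ ≤ 2 * σ := by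
        have h4 := dist_triangle q c x
        have h5 : dist c x ≤ σ := by rw [dist_comm]; exact mem_closedBall.mp hx
        rw [← dist_eq_norm]
        rw [hqc] at h4
        linarith
      calc |v q - v x| = ‖v q - v x‖ := rfl
        _ ≤ G * ‖q - x‖ := h1
        _ ≤ G * (2 * σ) := by nlinarith
    have hμball : volume (ball c σ) ≠ 0 := (measure_ball_pos volume c hσ).ne'
    obtain ⟨x, hx, hxavg⟩ :=
      exists_le_setAverage hμball measure_ball_lt_top.ne (hInt.mono_set hballS)
    have hvol : (volume (ball c σ)).toReal = σ ^ N * W := by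
      rw [Measure.addHaar_ball volume c hσ.le, finrank_euclideanSpace_fin,
        ENNReal.toReal_mul, ENNReal.toReal_ofReal (by positivity)]
    have havg : ⨍ a in ball c σ, |v a - m| ^ p ≤ (σ ^ N * W)⁻¹ * I := by
      rw [setAverage_eq, measureReal_def, hvol, smul_eq_mul]
      refine mul_le_mul_of_nonneg_left ?_ (by positivity)
      exact setIntegral_mono_set hInt
        (ae_of_all _ (fun a => Real.rpow_nonneg (abs_nonneg _) p))
        (HasSubset.Subset.eventuallyLE hballS)
    have hxm : |v x - m| ≤ ((σ ^ N * W)⁻¹ * I) ^ (1/p) :=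
      calc |v x - m| = (|v x - m| ^ p) ^ (1/p) := by
            rw [one_div, Real.rpow_rpow_inv (abs_nonneg _) hp0']
        _ ≤ ((σ ^ N * W)⁻¹ * I) ^ (1/p) :=
            Real.rpow_le_rpow (Real.rpow_nonneg (abs_nonneg _) p)
              (hxavg.trans havg) (by positivity)
    calc |v q - m| ≤ |v q - v x| + |v x - m| := abs_sub_le _ _ _
      _ ≤ G * (2 * σ) + ((σ ^ N * W)⁻¹ * I) ^ (1/p) :=
          add_le_add (hmvt x (ball_subset_closedBall hx)) hxm
      _ = 2 * σ * G + ((σ ^ N * W)⁻¹ * I) ^ (1/p) := by ring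
  rcases hI0.eq_or_lt with hIz | hIpos
  · -- degenerate case: the L^p deviation vanishes, so v is constant on the boundary
    have hfz : ∀ z ∈ S, v z = m := by
      by_contra hcon
      push_neg at hcon
      obtain ⟨z0, hz0S, hz0⟩ := hcon
      have hclosed : IsClosed {z | v z = m} := isClosed_eq hvc continuous_const
      have hUo : IsOpen (S ∩ {z | v z = m}ᶜ) := hSopen.inter hclosed.isOpen_compl
      have hUpos : 0 < volume (S ∩ {z | v z = m}ᶜ) :=
        hUo.measure_pos volume ⟨z0, hz0S, hz0⟩
      have haez : (fun x => |v x - m| ^ p) =ᵐ[volume.restrict S] 0 :=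
        (integral_eq_zero_iff_of_nonneg
          (fun x => Real.rpow_nonneg (abs_nonneg _) p) hInt).mp hIz.symm
      have hmeas : MeasurableSet {x | ¬ |v x - m| ^ p = (0:ℝ)} :=
        (measurableSet_eq_fun hfc.measurable measurable_const).compl
      have hzero : volume ({x | ¬ |v x - m| ^ p = (0:ℝ)} ∩ S) = 0 := by
        have h4 := ae_iff.mp haez
        simp only [Pi.zero_apply] at h4
        rwa [Measure.restrict_apply hmeas] at h4
      have hsub' : S ∩ {z | v z = m}ᶜ ⊆ {x | ¬ |v x - m| ^ p = (0:ℝ)} ∩ S := by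
        rintro z ⟨hzS, hzne⟩
        refine ⟨?_, hzS⟩
        have : 0 < |v z - m| := abs_pos.mpr (sub_ne_zero.mpr hzne)
        exact (Real.rpow_pos_of_pos this p).ne'
      exact absurd (measure_mono_null hsub' hzero) hUpos.ne'
    have hbd : ∀ q ∈ frontier Ω, |v q - m| ≤ 0 := by
      intro q hq
      have hcl : closure S ⊆ {z | v z = m} :=
        closure_minimal hfz (isClosed_eq hvc continuous_const)
      have : v q = m := hcl (hΓsub hq)
      simp [this]
    have hosc := osc_le_of_abs_sub_le hΓne hbd
    rw [← hIz, Real.zero_rpow (one_div_ne_zero hp0'),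
      Real.zero_rpow (div_ne_zero hp0' hs0), mul_zero]
    linarith
  · -- main case
    set η := I ^ (1/p) with hη_def
    have hη : 0 < η := Real.rpow_pos_of_pos hIpos _
    have hGpos : 0 < G := by
      by_contra hG'
      push_neg at hG'
      have hpos : 0 < (1/3:ℝ) ^ (s/p) * r_i ^ (s/p) := by positivity
      nlinarith [hsmall, hη]
    set σ := (η / G) ^ (p / s) with hσ_def
    have hηG : 0 < η / G := div_pos hη hGpos
    have hσpos : 0 < σ := Real.rpow_pos_of_pos hηG _
    have hσ3 : σ ≤ r_i / 3 := by
      have h6 : η / G ≤ (1/3:ℝ) ^ (s/p) * r_i ^ (s/p) := by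
        rw [div_le_iff₀ hGpos]; exact hsmall
      have h7 : σ ≤ ((1/3:ℝ) ^ (s/p) * r_i ^ (s/p)) ^ (p/s) :=
        Real.rpow_le_rpow hηG.le h6 (by positivity)
      have h8 : ((1/3:ℝ) ^ (s/p) * r_i ^ (s/p)) ^ (p/s) = (1/3) * r_i := by
        rw [Real.mul_rpow (by positivity) (by positivity),
          ← Real.rpow_mul (by norm_num : (0:ℝ) ≤ 1/3), ← Real.rpow_mul hri.le]
        have h9 : s/p * (p/s) = 1 := by field_simp
        rw [h9, Real.rpow_one, Real.rpow_one]
      rw [h8] at h7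
      linarith
    have hosc := osc_le_of_abs_sub_le hΓne (key σ hσpos hσ3)
    refine hosc.trans (le_of_eq ?_)
    -- now an exact computation with rpow
    have lσ : Real.log σ = (p/s) * (Real.log η - Real.log G) := by
      rw [hσ_def, Real.log_rpow hηG, Real.log_div hη.ne' hGpos.ne']
    have lI : Real.log I = p * Real.log η := by
      rw [hη_def, Real.log_rpow hIpos]
      field_simp
    have e1 : σ * G = G ^ ((N:ℝ)/s) * η ^ (p/s) := by
      conv_lhs => rw [← Real.exp_log hσpos, ← Real.exp_log hGpos]
      rw [Real.rpow_def_of_pos hGpos, Real.rpow_def_of_pos hη,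
        ← Real.exp_add, ← Real.exp_add, Real.exp_eq_exp, lσ, hs_def]
      have hNp : (N:ℝ) + p ≠ 0 := by rw [← hs_def]; exact hs0
      field_simp
      ring
    have e2 : ((σ ^ N * W)⁻¹ * I) ^ (1/p)
        = W ^ (-(1/p)) * (G ^ ((N:ℝ)/s) * η ^ (p/s)) := by
      have hbase : (0:ℝ) < (σ ^ N * W)⁻¹ * I :=
        mul_pos (inv_pos.mpr (mul_pos (pow_pos hσpos N) hW)) hIpos
      rw [Real.rpow_def_of_pos hbase, Real.rpow_def_of_pos hW,
        Real.rpow_def_of_pos hGpos, Real.rpow_def_of_pos hη]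
      simp only [← Real.exp_add]
      rw [Real.exp_eq_exp]
      rw [Real.log_mul (inv_ne_zero (mul_pos (pow_pos hσpos N) hW).ne') hIpos.ne',
        Real.log_inv, Real.log_mul (pow_pos hσpos N).ne' hW.ne', Real.log_pow, lσ, lI,
        hs_def]
      have hNp : (N:ℝ) + p ≠ 0 := by rw [← hs_def]; exact hs0
      field_simp
      ring
    rw [e2]
    linear_combination (4:ℝ) * e1
end
end

section
/- Suppose Ω∖cl(ω) satisfies the uniform interior sphere condition with radius r_i > 0 on Γ, i.e., for each p ∈ Γ there exists an open ball of radius r_i contained in Ω∖cl(ω) whose closure intersects Γ ∪ ∂ω only at p. Then the complementary parallel set Ω^c_{r_i} := {y ∈ Ω : dist(y, Γ) < r_i} satisfies the interior sphere condition with radius r_i/2: for every point p of the boundary ∂Ω^c_{r_i} there exists an open ball of radius r_i/2 contained in Ω^c_{r_i} whose closure contains p. -/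
open MeasureTheory Metric Set Bornology
open scoped RealInnerProductSpace ENNReal Topology

noncomputable section

/-- the complementary parallel set `Ω^c_{r_i}` satisfies the interior
sphere condition with radius `r_i/2` (Lemma 7.11 of the paper). -/
theorem stmt_18 (N : ℕ) (hN : 2 ≤ N)
    (Ω ω : Set (EuclideanSpace ℝ (Fin N))) (r_i : ℝ) (hri : 0 < r_i)
    (hΩo : IsOpen Ω) (hΩconn : IsConnected Ω) (hΩb : IsBounded Ω)
    (hωo : IsOpen ω) (hωΩ : closure ω ⊆ Ω)
    -- uniform interior sphere condition of radius r_i on Γ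
    (hsphere : UnifIntSphere (Ω \ closure ω) (frontier Ω ∪ frontier ω) (frontier Ω) r_i) :
    ∀ p ∈ frontier {y ∈ Ω | infDist y (frontier Ω) < r_i},
      ∃ y : EuclideanSpace ℝ (Fin N),
        ball y (r_i / 2) ⊆ {y ∈ Ω | infDist y (frontier Ω) < r_i} ∧
        p ∈ closedBall y (r_i / 2) := by
  intro p hp
  set Γ := frontier Ω with hΓ
  set D := {y ∈ Ω | infDist y Γ < r_i} with hD
  have hDopen : IsOpen D :=
    hΩo.inter (isOpen_lt (continuous_infDist_pt Γ) continuous_const)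
  have hpD : p ∉ D := by
    intro h
    exact hp.2 (by rwa [hDopen.interior_eq])
  have hpcl : p ∈ closure D := hp.1
  have hmid : ∀ a b : EuclideanSpace ℝ (Fin N),
      dist (midpoint ℝ a b) a = dist a b / 2 ∧ dist (midpoint ℝ a b) b = dist a b / 2 := by
    intro a b
    constructor
    · rw [dist_midpoint_left]; norm_num; ring
    · rw [dist_midpoint_right]; norm_num; ring
  by_cases hpΩ : p ∈ Ω
  · -- inner boundary case: infDist p Γ = r_i
    have h1 : r_i ≤ infDist p Γ := by
      by_contra h
      exact hpD ⟨hpΩ, lt_of_not_ge h⟩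
    have h2 : infDist p Γ ≤ r_i := by
      have hcl : closure D ⊆ {x | infDist x Γ ≤ r_i} := by
        apply closure_minimal
        · intro x hx; exact le_of_lt hx.2
        · exact isClosed_le (continuous_infDist_pt Γ) continuous_const
      exact hcl hpcl
    have hΓne : Γ.Nonempty := by
      by_contra h
      rw [not_nonempty_iff_eq_empty] at h
      rw [h, infDist_empty] at h1
      linarith
    have hΓc : IsCompact Γ := by
      apply Metric.isCompact_of_isClosed_isBounded isClosed_frontier
      exact hΩb.closure.subset (frontier_subset_closure)
    obtain ⟨q, hq, hdq⟩ := hΓc.exists_infDist_eq_dist hΓne p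
    have hdpq : dist p q = r_i := by rw [← hdq]; linarith
    -- ball p r_i ⊆ Ω by connectedness
    have hballΩ : ball p r_i ⊆ Ω := by
      have hdisj : ∀ x ∈ ball p r_i, x ∉ Γ := by
        intro x hx hxΓ
        have : infDist p Γ ≤ dist p x := infDist_le_dist_of_mem hxΓ
        rw [mem_ball, dist_comm] at hx
        linarith
      have hsub : ball p r_i ⊆ Ω ∪ interior Ωᶜ := by
        intro x hx
        rcases em (x ∈ closure Ω) with hc | hc
        · rcases em (x ∈ Ω) with h | h
          · exact Or.inl h
          · exact absurd ⟨hc, by rwa [hΩo.interior_eq]⟩ (hdisj x hx)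
        · right; rw [interior_compl]; exact hc
      have hdis : Disjoint Ω (interior Ωᶜ) := by
        rw [interior_compl]
        exact disjoint_compl_right.mono_right (compl_subset_compl.2 subset_closure)
      exact (convex_ball p r_i).isPreconnected.subset_left_of_subset_union hΩo isOpen_interior
        hdis hsub ⟨p, mem_ball_self hri, hpΩ⟩
    refine ⟨midpoint ℝ p q, ?_, ?_⟩
    · intro x hx
      rw [mem_ball] at hx
      obtain ⟨hm1, hm2⟩ := hmid p q
      have hxp : dist x p < r_i := by
        calc dist x p ≤ dist x (midpoint ℝ p q) + dist (midpoint ℝ p q) p := dist_triangle _ _ _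
          _ < r_i / 2 + r_i / 2 := by rw [hm1, hdpq]; linarith
          _ = r_i := by ring
      have hxq : dist x q < r_i := by
        calc dist x q ≤ dist x (midpoint ℝ p q) + dist (midpoint ℝ p q) q := dist_triangle _ _ _
          _ < r_i / 2 + r_i / 2 := by rw [hm2, hdpq]; linarith
          _ = r_i := by ring
      refine ⟨hballΩ (by rwa [mem_ball]), ?_⟩
      exact lt_of_le_of_lt (infDist_le_dist_of_mem hq) hxq
    · rw [mem_closedBall, dist_comm, (hmid p q).1, hdpq]
  · -- boundary case: p ∈ Γ
    have hpΓ : p ∈ Γ := by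
      have : p ∈ closure Ω := by
        have := closure_mono (show D ⊆ Ω from fun x hx => hx.1)
        exact this hpcl
      exact ⟨this, by rwa [hΩo.interior_eq]⟩
    obtain ⟨y, hy1, hy2⟩ := hsphere p hpΓ
    have hpcb : p ∈ closedBall y r_i := by
      have : p ∈ ({p} : Set _) := rfl
      rw [← hy2] at this
      exact this.1
    have hpnb : p ∉ ball y r_i := by
      intro h
      exact hpΩ (hy1 h).1
    have hdpy : dist p y = r_i := by
      rw [mem_closedBall] at hpcb
      rw [mem_ball] at hpnb
      exact le_antisymm hpcb (not_lt.1 hpnb)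
    refine ⟨midpoint ℝ y p, ?_, ?_⟩
    · intro x hx
      rw [mem_ball] at hx
      obtain ⟨hm1, hm2⟩ := hmid y p
      have hdyp : dist y p = r_i := by rwa [dist_comm] at hdpy
      have hxy : dist x y < r_i := by
        calc dist x y ≤ dist x (midpoint ℝ y p) + dist (midpoint ℝ y p) y := dist_triangle _ _ _
          _ < r_i / 2 + r_i / 2 := by rw [hm1, hdyp]; linarith
          _ = r_i := by ring
      have hxp : dist x p < r_i := by
        calc dist x p ≤ dist x (midpoint ℝ y p) + dist (midpoint ℝ y p) p := dist_triangle _ _ _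
          _ < r_i / 2 + r_i / 2 := by rw [hm2, hdyp]; linarith
          _ = r_i := by ring
      refine ⟨(hy1 (by rwa [mem_ball])).1, ?_⟩
      exact lt_of_le_of_lt (infDist_le_dist_of_mem hpΓ) hxp
    · rw [mem_closedBall, dist_comm, (hmid y p).2, dist_comm, hdpy]
end
end
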